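/- Assume T_ref > 0 and D₋(u) = exp(u²)∫_{-∞}^{u} exp(-v²) dv. Then for any real y, z with z > 0 and V_r < V_th, the mean map S₁(y,z) = (T_ref + (2/L)∫_{I(V_r,y,z)}^{I(V_th,y,z)} D₋(u) du)^{-1} with I(ξ,y,z) = (ξL - y)/z and L > 0 satisfies 0 < S₁(y,z) < 1/T_ref, and S₁ is strictly increasing in y. -/

import Mathlib

open MeasureTheory Set Real

private lemma gauss_integrable : Integrable (fun v : ℝ => Real.exp (-v ^ 2)) := by
  simpa [neg_mul, one_mul] using integrable_exp_neg_mul_sq (b := (1:ℝ)) one_pos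

/-- key representation: e^{u²}∫_{Iic u} e^{-v²} = ∫_{Ioi 0} e^{2ut - t²} -/
private lemma Dm_repr (u : ℝ) :
    Real.exp (u ^ 2) * (∫ v in Set.Iic u, Real.exp (-v ^ 2)) =
      ∫ t in Set.Ioi (0:ℝ), Real.exp (2 * u * t - t ^ 2) := by
  have hmp : MeasurePreserving (fun t : ℝ => u - t) volume volume :=
    Measure.measurePreserving_sub_left volume u
  have hemb : MeasurableEmbedding (fun t : ℝ => u - t) :=
    (Homeomorph.subLeft u).measurableEmbedding
  have hpre : (fun t : ℝ => u - t) ⁻¹' Set.Iio u = Set.Ioi (0:ℝ) := by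
    ext t; simp [sub_lt_iff_lt_add]
  have h1 : (∫ v in Set.Iic u, Real.exp (-v ^ 2)) =
      ∫ t in Set.Ioi (0:ℝ), Real.exp (-(u - t) ^ 2) := by
    rw [integral_Iic_eq_integral_Iio, ← hpre,
      hmp.setIntegral_preimage_emb hemb (fun v => Real.exp (-v ^ 2)) (Set.Iio u)]
  rw [h1, ← integral_const_mul]
  apply setIntegral_congr_fun measurableSet_Ioi
  intro t _
  show Real.exp (u ^ 2) * Real.exp (-(u - t) ^ 2) = Real.exp (2 * u * t - t ^ 2)
  rw [← Real.exp_add]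
  congr 1
  ring

private lemma h_integrableOn (u : ℝ) :
    IntegrableOn (fun t : ℝ => Real.exp (2 * u * t - t ^ 2)) (Set.Ioi (0:ℝ)) := by
  have : Integrable (fun t : ℝ => Real.exp (u ^ 2) * Real.exp (-(t - u) ^ 2)) :=
    ((gauss_integrable.comp_sub_right u)).const_mul _
  have heq : (fun t : ℝ => Real.exp (u ^ 2) * Real.exp (-(t - u) ^ 2)) =
      fun t : ℝ => Real.exp (2 * u * t - t ^ 2) := by
    funext t; rw [← Real.exp_add]; ring_nf
  rw [← heq]
  exact this.integrableOn

private lemma setIntegral_Ioi_pos {f : ℝ → ℝ} (hf : ∀ t, 0 < t → 0 < f t)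
    (hi : IntegrableOn f (Set.Ioi (0:ℝ))) : 0 < ∫ t in Set.Ioi (0:ℝ), f t := by
  rw [setIntegral_pos_iff_support_of_nonneg_ae ?nn hi]
  case nn =>
    filter_upwards [ae_restrict_mem measurableSet_Ioi] with t ht
    exact (hf t ht).le
  have hsub : Set.Ioi (0:ℝ) ⊆ Function.support f ∩ Set.Ioi 0 := fun t ht =>
    ⟨(hf t ht).ne', ht⟩
  calc (0:ENNReal) < volume (Set.Ioi (0:ℝ)) := by simp
    _ ≤ _ := measure_mono hsub

/-- The Siegert mean (firing-rate) map S₁ is positive, bounded by 1/T_ref, and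
strictly increasing in the input mean y. -/
theorem stmt16 (Tref L Vr Vth z : ℝ) (hT : 0 < Tref) (hL : 0 < L) (hV : Vr < Vth)
    (hz : 0 < z)
    (Dm : ℝ → ℝ)
    (hDm : Dm = fun u : ℝ => Real.exp (u ^ 2) * ∫ v in Set.Iic u, Real.exp (-v ^ 2))
    (S1 : ℝ → ℝ)
    (hS1 : S1 = fun y : ℝ =>
      (Tref + (2 / L) * ∫ u in ((Vr * L - y) / z)..((Vth * L - y) / z), Dm u)⁻¹) :
    (∀ y : ℝ, 0 < S1 y ∧ S1 y < 1 / Tref) ∧ StrictMono S1 := by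
  have hDrepr : ∀ u, Dm u = ∫ t in Set.Ioi (0:ℝ), Real.exp (2 * u * t - t ^ 2) := by
    intro u; rw [hDm]; exact Dm_repr u
  -- positivity of Dm
  have hDpos : ∀ u, 0 < Dm u := by
    intro u
    rw [hDrepr]
    exact setIntegral_Ioi_pos (fun t _ => Real.exp_pos _) (h_integrableOn u)
  -- strict monotonicity of Dm
  have hDmono : StrictMono Dm := by
    intro a b hab
    have := setIntegral_Ioi_pos (f := fun t =>
        Real.exp (2 * b * t - t ^ 2) - Real.exp (2 * a * t - t ^ 2))
      (fun t ht => by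
        rw [sub_pos]
        apply Real.exp_lt_exp.2
        have : 2 * a * t < 2 * b * t := by nlinarith
        linarith)
      ((h_integrableOn b).sub (h_integrableOn a))
    rw [integral_sub (h_integrableOn b) (h_integrableOn a)] at this
    rw [hDrepr a, hDrepr b]; linarith
  -- continuity of Dm
  have hDcont : Continuous Dm := by
    have hPhi : Continuous fun u : ℝ => ∫ v in Set.Iic u, Real.exp (-v ^ 2) := by
      have heq : (fun u : ℝ => ∫ v in Set.Iic u, Real.exp (-v ^ 2)) =
          fun u : ℝ => (∫ v in (0:ℝ)..u, Real.exp (-v ^ 2)) +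
            ∫ v in Set.Iic (0:ℝ), Real.exp (-v ^ 2) := by
        funext u
        have := intervalIntegral.integral_Iic_sub_Iic (μ := volume) (a := (0:ℝ)) (b := u)
          gauss_integrable.integrableOn gauss_integrable.integrableOn
        linarith
      rw [heq]
      exact (intervalIntegral.continuous_primitive
        (fun a b => gauss_integrable.intervalIntegrable) 0).add continuous_const
    rw [hDm]
    exact (Real.continuous_exp.comp (continuous_pow 2)).mul hPhi
  -- the inner integral
  set F : ℝ → ℝ := fun y => ∫ u in ((Vr * L - y) / z)..((Vth * L - y) / z), Dm u with hF
  have hab : ∀ y : ℝ, (Vr * L - y) / z < (Vth * L - y) / z := by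
    intro y
    gcongr <;> nlinarith
  have hFpos : ∀ y, 0 < F y := fun y =>
    intervalIntegral.intervalIntegral_pos_of_pos (hDcont.intervalIntegrable _ _) hDpos (hab y)
  have hden : ∀ y, Tref < Tref + (2 / L) * F y := by
    intro y
    have : 0 < (2 / L) * F y := mul_pos (by positivity) (hFpos y)
    linarith
  have hdenpos : ∀ y, 0 < Tref + (2 / L) * F y := fun y => hT.trans (hden y)
  constructor
  · intro y
    rw [hS1]
    constructor
    · exact inv_pos.2 (hdenpos y)
    · rw [one_div]
      exact inv_strictAnti₀ hT (hden y)
  · intro y₁ y₂ hy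
    rw [hS1]
    simp only
    apply inv_strictAnti₀ (hdenpos y₂)
    have hFlt : F y₂ < F y₁ := by
      set δ := (y₂ - y₁) / z with hδ
      have hδpos : 0 < δ := div_pos (by linarith) hz
      have ha : (Vr * L - y₂) / z + δ = (Vr * L - y₁) / z := by
        rw [hδ]; field_simp; ring
      have hb : (Vth * L - y₂) / z + δ = (Vth * L - y₁) / z := by
        rw [hδ]; field_simp; ring
      have hshift : F y₁ = ∫ u in ((Vr * L - y₂) / z)..((Vth * L - y₂) / z),
          Dm (u + δ) := by
        rw [hF]
        simp only
        rw [intervalIntegral.integral_comp_add_right, ha, hb]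
      have hc1 : Continuous fun u : ℝ => Dm (u + δ) :=
        hDcont.comp (continuous_id.add continuous_const)
      have hpos : 0 < ∫ u in ((Vr * L - y₂) / z)..((Vth * L - y₂) / z),
          (Dm (u + δ) - Dm u) := by
        apply intervalIntegral.intervalIntegral_pos_of_pos
        · exact (hc1.sub hDcont).intervalIntegrable _ _
        · intro x
          exact sub_pos.2 (hDmono (by linarith))
        · exact hab y₂
      rw [intervalIntegral.integral_sub (hc1.intervalIntegrable _ _)
        (hDcont.intervalIntegrable _ _)] at hpos
      rw [hshift, hF]
      simp only
      linarith
    have : (2 / L) * F y₂ < (2 / L) * F y₁ :=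
      mul_lt_mul_of_pos_left hFlt (by positivity)
    linarith
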